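/- Let C ⊆ X be a closed cone in a finite-dimensional inner product space and c ∈ C. Then the outer second-order tangent set to C at the origin in direction c equals the tangent cone to C at c: T²_C(0; c) = T_C(c). -/

import Mathlib

open Filter Topology

/-- The (Bouligand) tangent cone to `S` at `x`, via sequences. -/
def tangentConeB {X : Type*} [NormedAddCommGroup X] [InnerProductSpace ℝ X]
    (S : Set X) (x : X) : Set X :=
  {d | ∃ (t : ℕ → ℝ) (dk : ℕ → X), (∀ k, 0 < t k) ∧ Tendsto t atTop (𝓝 0) ∧
    Tendsto dk atTop (𝓝 d) ∧ ∀ k, x + t k • dk k ∈ S}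

/-- The outer second-order tangent set to `S` at `x` in direction `h`:
`w` such that `dist (x + t_k h + ½ t_k² w, S) = o(t_k²)` for some `t_k ↓ 0`. -/
def outerSecondOrderTangentSet {X : Type*} [NormedAddCommGroup X] [InnerProductSpace ℝ X]
    (S : Set X) (x h : X) : Set X :=
  {w | ∃ t : ℕ → ℝ, (∀ k, 0 < t k) ∧ Tendsto t atTop (𝓝 0) ∧
    Tendsto (fun k => Metric.infDist (x + t k • h + ((t k) ^ 2 / 2) • w) S / (t k) ^ 2)
      atTop (𝓝 0)}

lemma infDist_smul_cone {X : Type*} [NormedAddCommGroup X] [NormedSpace ℝ X]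
    [ProperSpace X] {C : Set X} (hC : IsClosed C) (hne : C.Nonempty)
    (hcone : ∀ (lam : ℝ), 0 ≤ lam → ∀ c ∈ C, lam • c ∈ C)
    {lam : ℝ} (hlam : 0 < lam) (x : X) :
    Metric.infDist (lam • x) C = lam * Metric.infDist x C := by
  obtain ⟨y, hy, hxy⟩ := hC.exists_infDist_eq_dist hne x
  obtain ⟨z, hz, hz2⟩ := hC.exists_infDist_eq_dist hne (lam • x)
  apply le_antisymm
  · calc Metric.infDist (lam • x) C ≤ dist (lam • x) (lam • y) :=
          Metric.infDist_le_dist_of_mem (hcone lam hlam.le y hy)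
      _ = lam * dist x y := by
          rw [dist_smul₀, Real.norm_eq_abs, abs_of_pos hlam]
      _ = lam * Metric.infDist x C := by rw [hxy]
  · have hinv : lam⁻¹ • z ∈ C := hcone _ (by positivity) z hz
    calc lam * Metric.infDist x C ≤ lam * dist x (lam⁻¹ • z) := by
          have := Metric.infDist_le_dist_of_mem hinv (x := x)
          nlinarith
      _ = dist (lam • x) z := by
          rw [← smul_inv_smul₀ hlam.ne' z, dist_smul₀, Real.norm_eq_abs, abs_of_pos hlam,
            smul_inv_smul₀ hlam.ne']
      _ = Metric.infDist (lam • x) C := hz2.symm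

/-- For a closed cone `C` and `c ∈ C`, the outer second-order tangent set to `C` at the
origin in direction `c` equals the tangent cone to `C` at `c`: `T²_C(0; c) = T_C(c)`. -/
theorem outerSecondOrderTangentSet_cone_zero
    {X : Type*} [NormedAddCommGroup X] [InnerProductSpace ℝ X] [FiniteDimensional ℝ X]
    (C : Set X) (hC : IsClosed C) (hcone : ∀ (lam : ℝ), 0 ≤ lam → ∀ c ∈ C, lam • c ∈ C)
    (c : X) (hc : c ∈ C) :
    outerSecondOrderTangentSet C 0 c = tangentConeB C c := by
  have hne : C.Nonempty := ⟨c, hc⟩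
  ext w
  constructor
  · rintro ⟨t, htpos, ht0, hquot⟩
    set s : ℕ → ℝ := fun k => t k / 2 with hs
    have hspos : ∀ k, 0 < s k := fun k => div_pos (htpos k) two_pos
    choose y hyC hydist using fun k => hC.exists_infDist_eq_dist hne (c + s k • w)
    refine ⟨s, fun k => (s k)⁻¹ • (y k - c), hspos, ?_, ?_, fun k => ?_⟩
    · simpa [hs] using ht0.div_const 2
    · -- rewrite the quotient
      have key : ∀ k, ‖(s k)⁻¹ • (y k - c) - w‖ =
          2 * (Metric.infDist ((0:X) + t k • c + ((t k) ^ 2 / 2) • w) C / (t k) ^ 2) := by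
        intro k
        have ht : (0:X) + t k • c + ((t k) ^ 2 / 2) • w = t k • (c + s k • w) := by
          simp only [hs]
          match_scalars <;> ring
        rw [ht, infDist_smul_cone hC hne hcone (htpos k)]
        have h1 : (s k)⁻¹ • (y k - c) - w = (s k)⁻¹ • (y k - (c + s k • w)) := by
          have hsne := (hspos k).ne'
          match_scalars <;> field_simp
        rw [h1, norm_smul, Real.norm_eq_abs, abs_of_pos (inv_pos.mpr (hspos k)), ← dist_eq_norm']
        rw [← hydist k]
        have : (t k : ℝ) ≠ 0 := (htpos k).ne'
        field_simp [hs]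
        rw [show s k = t k / 2 from rfl]
        field_simp
      have : Tendsto (fun k => ‖(s k)⁻¹ • (y k - c) - w‖) atTop (𝓝 0) := by
        simp only [key]
        simpa using hquot.const_mul 2
      exact tendsto_iff_norm_sub_tendsto_zero.mpr this
    · have : c + s k • (s k)⁻¹ • (y k - c) = y k := by
        rw [smul_inv_smul₀ (hspos k).ne']; abel
      rw [this]; exact hyC k
  · rintro ⟨t, dk, htpos, ht0, hdk, hmem⟩
    refine ⟨fun k => 2 * t k, fun k => mul_pos two_pos (htpos k), ?_, ?_⟩
    · simpa using ht0.const_mul 2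
    · have key : ∀ k, Metric.infDist ((0:X) + (2 * t k) • c + ((2 * t k) ^ 2 / 2) • w) C
          / (2 * t k) ^ 2 ≤ ‖dk k - w‖ / 2 := by
        intro k
        have ht : (0:X) + (2 * t k) • c + ((2 * t k) ^ 2 / 2) • w
            = (2 * t k) • (c + t k • w) := by
          match_scalars <;> ring
        rw [ht, infDist_smul_cone hC hne hcone (mul_pos two_pos (htpos k))]
        have hle : Metric.infDist (c + t k • w) C ≤ dist (c + t k • w) (c + t k • dk k) :=
          Metric.infDist_le_dist_of_mem (hmem k)
        have hd : dist (c + t k • w) (c + t k • dk k) = t k * ‖dk k - w‖ := by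
          rw [dist_eq_norm]
          have : c + t k • w - (c + t k • dk k) = t k • (w - dk k) := by
            rw [smul_sub]; abel
          rw [this, norm_smul, Real.norm_eq_abs, abs_of_pos (htpos k), norm_sub_rev]
        have htk : (t k : ℝ) ≠ 0 := (htpos k).ne'
        rw [hd] at hle
        have hnn := Metric.infDist_nonneg (x := c + t k • w) (s := C)
        have ht0' := htpos k
        rw [div_le_div_iff₀ (by positivity) (by norm_num)]
        nlinarith [mul_le_mul_of_nonneg_left hle (le_of_lt ht0')]
      have hnn : ∀ k, 0 ≤ Metric.infDist ((0:X) + (2 * t k) • c + ((2 * t k) ^ 2 / 2) • w) C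
          / (2 * t k) ^ 2 := fun k => div_nonneg Metric.infDist_nonneg (sq_nonneg _)
      have hbd : Tendsto (fun k => ‖dk k - w‖ / 2) atTop (𝓝 0) := by
        have : Tendsto (fun k => ‖dk k - w‖) atTop (𝓝 0) :=
          tendsto_iff_norm_sub_tendsto_zero.mp hdk
        simpa using this.div_const 2
      exact squeeze_zero hnn key hbd
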